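/- Under the hypotheses of the Hà–Van Tuyl setup — G chordal, e = {u,v} ∈ E(G) with G_{N(v)} complete, N(u) = {v, x_1, …, x_t} — an edge e' of G satisfies dist_G(e, e') ≤ 2 if and only if e' ∩ {u, v, x_1, …, x_t} ≠ ∅; consequently the subgraph G' with edge set {e' : dist_G(e,e') ≥ 3} equals the induced subgraph G_W, where W is the set of vertices lying on some edge of G'. -/

import Mathlib

open MvPolynomial

/-- A minimal free resolution (with Betti numbers `b i`) of the module `M` over `S`,
minimality being taken with respect to the (maximal) ideal `mx`. -/
structure MinFreeRes (S : Type*) [CommRing S] (mx : Ideal S)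
    (M : Type*) [AddCommGroup M] [Module S M] (b : ℕ → ℕ) where
  d : ∀ i : ℕ, (Fin (b (i + 1)) → S) →ₗ[S] (Fin (b i) → S)
  aug : (Fin (b 0) → S) →ₗ[S] M
  aug_surj : Function.Surjective aug
  exact_aug : LinearMap.ker aug = LinearMap.range (d 0)
  exact : ∀ i, LinearMap.ker (d i) = LinearMap.range (d (i + 1))
  minimal : ∀ i, LinearMap.range (d i) ≤ mx • (⊤ : Submodule S (Fin (b i) → S))

/-- The irrelevant maximal ideal `(x_v : v ∈ V)` of the polynomial ring. -/
noncomputable def maxIdeal (K : Type*) [Field K] (V : Type*) : Ideal (MvPolynomial V K) :=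
  Ideal.span (Set.range X)

/-- `I` is a monomial ideal. -/
def IsMonomialIdeal {K V : Type*} [Field K] (I : Ideal (MvPolynomial V K)) : Prop :=
  ∃ A : Set (V →₀ ℕ), I = Ideal.span ((fun s => monomial s (1 : K)) '' A)

/-- `I` is a squarefree monomial ideal. -/
def IsSqfreeMonomialIdeal {K V : Type*} [Field K] (I : Ideal (MvPolynomial V K)) : Prop :=
  ∃ A : Set (V →₀ ℕ), (∀ s ∈ A, ∀ v, s v ≤ 1) ∧
    I = Ideal.span ((fun s => monomial s (1 : K)) '' A)

/-- The edge ideal of a finite simple graph. -/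
noncomputable def edgeIdeal (K : Type*) [Field K] {V : Type*} (G : SimpleGraph V) :
    Ideal (MvPolynomial V K) :=
  Ideal.span {p | ∃ u v, G.Adj u v ∧ p = X u * X v}

/-- The edge ideal of the induced subgraph `G_W`, in the same polynomial ring. -/
noncomputable def edgeIdealOn (K : Type*) [Field K] {V : Type*} (G : SimpleGraph V) (W : Set V) :
    Ideal (MvPolynomial V K) :=
  Ideal.span {p | ∃ u v, G.Adj u v ∧ u ∈ W ∧ v ∈ W ∧ p = X u * X v}

/-- A cycle `w` in `G` has a chord: an edge of `G` joining two vertices of the cycle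
which is not an edge of the cycle. -/
def HasChord {V : Type*} (G : SimpleGraph V) {v : V} (w : G.Walk v v) : Prop :=
  ∃ a b, a ∈ w.support ∧ b ∈ w.support ∧ G.Adj a b ∧ s(a, b) ∉ w.edges

/-- A graph is chordal if every cycle of length `> 3` has a chord. -/
def IsChordal {V : Type*} (G : SimpleGraph V) : Prop :=
  ∀ (v : V) (w : G.Walk v v), w.IsCycle → 3 < w.length → HasChord G w

/-- A chain of `ℓ + 1` edges of `G` from `e` to `e'`, consecutive ones intersecting. -/
def IsEdgeChain {V : Type*} (G : SimpleGraph V) (e e' : Sym2 V) (ℓ : ℕ) : Prop :=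
  ∃ c : Fin (ℓ + 1) → Sym2 V, c 0 = e ∧ c (Fin.last ℓ) = e' ∧
    (∀ i, c i ∈ G.edgeSet) ∧ ∀ i : Fin ℓ, ∃ x : V, x ∈ c i.castSucc ∧ x ∈ c i.succ

/-- The distance between two edges of `G` (`⊤` if there is no chain joining them). -/
noncomputable def edgeDist {V : Type*} (G : SimpleGraph V) (e e' : Sym2 V) : ℕ∞ :=
  sInf ((fun ℓ : ℕ => (ℓ : ℕ∞)) '' {ℓ | IsEdgeChain G e e' ℓ})

/-- The subgraph `G'` of `G` whose edges are those at distance `≥ 3` from `e`. -/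
def farSubgraph {V : Type*} (G : SimpleGraph V) (e : Sym2 V) : SimpleGraph V where
  Adj a b := G.Adj a b ∧ 3 ≤ edgeDist G e s(a, b)
  symm := by
    constructor
    intro a b h
    refine ⟨h.1.symm, ?_⟩
    rw [Sym2.eq_swap]
    exact h.2
  loopless := ⟨fun a h => G.loopless.irrefl a h.1⟩

/-- The transpose (dual) of a map of finite free modules. -/
noncomputable def dualMap {S : Type*} [CommRing S] {a b : ℕ}
    (f : (Fin a → S) →ₗ[S] (Fin b → S)) : (Fin b → S) →ₗ[S] (Fin a → S) :=
  Matrix.toLin' (Matrix.transpose (LinearMap.toMatrix' f))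

/-- `S/I` is Gorenstein: either `I = 0` (and `S` is a polynomial ring, hence Gorenstein),
or the dual of a minimal free resolution of `S/I` of length `p` is exact except at the
last spot, where its cokernel (the canonical module `Ext^p_S(S/I, S)`) is isomorphic
to `S/I`. -/
def IsGorensteinQuot {S : Type*} [CommRing S] (mx : Ideal S) (I : Ideal S) : Prop :=
  I = ⊥ ∨
  ∃ (b : ℕ → ℕ) (q : ℕ) (F : MinFreeRes S mx (S ⧸ I) b),
    (∀ i, q + 1 < i → b i = 0) ∧
    LinearMap.ker (dualMap (F.d 0)) = ⊥ ∧
    (∀ i, i + 1 ≤ q →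
      LinearMap.ker (dualMap (F.d (i + 1))) = LinearMap.range (dualMap (F.d i))) ∧
    Nonempty (((Fin (b (q + 1)) → S) ⧸ LinearMap.range (dualMap (F.d q))) ≃ₗ[S] (S ⧸ I))

lemma adj_of_mem_edge {V : Type*} {G : SimpleGraph V} {e : Sym2 V} (he : e ∈ G.edgeSet)
    {x y : V} (hx : x ∈ e) (hy : y ∈ e) (hxy : x ≠ y) : G.Adj x y := by
  induction e using Sym2.ind with
  | _ p q =>
    rw [Sym2.mem_iff] at hx hy
    rw [SimpleGraph.mem_edgeSet] at he
    rcases hx with rfl | rfl <;> rcases hy with rfl | rfl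
    · exact absurd rfl hxy
    · exact he
    · exact he.symm
    · exact absurd rfl hxy

lemma edgeDist_le_iff {V : Type*} (G : SimpleGraph V) (e e' : Sym2 V) (n : ℕ) :
    edgeDist G e e' ≤ n ↔ ∃ ℓ ≤ n, IsEdgeChain G e e' ℓ := by
  constructor
  · intro h
    by_contra hc
    push_neg at hc
    have h1 : ((n : ℕ∞) + 1) ≤ edgeDist G e e' := by
      apply le_sInf
      rintro x ⟨ℓ, hℓ, rfl⟩
      have : n + 1 ≤ ℓ := by
        by_contra h'
        exact hc ℓ (by omega) hℓ
      show ((n : ℕ∞) + 1) ≤ (ℓ : ℕ∞)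
      exact_mod_cast this
    have h2 := h1.trans h
    have h3 : n + 1 ≤ n := by exact_mod_cast h2
    omega
  · rintro ⟨ℓ, hℓ, hc⟩
    calc edgeDist G e e' ≤ (ℓ : ℕ∞) := sInf_le ⟨ℓ, hc, rfl⟩
    _ ≤ (n : ℕ∞) := by exact_mod_cast hℓ

lemma far_edge {V : Type*} (G : SimpleGraph V) (e : Sym2 V) {e' : Sym2 V}
    (h : e' ∈ (farSubgraph G e).edgeSet) : e' ∈ G.edgeSet ∧ 3 ≤ edgeDist G e e' := by
  induction e' using Sym2.ind with
  | _ p q =>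
    rw [SimpleGraph.mem_edgeSet] at h
    exact ⟨h.1, h.2⟩

/-- in the Hà–Van Tuyl setup (`G` chordal, `e = {u,v}` an edge with
`G_{N(v)}` complete, `N(u) = {v, x_1, …, x_t}`, so that
`{u, v, x_1, …, x_t} = {u} ∪ N(u)`), an edge `e'` of `G` satisfies
`dist_G(e, e') ≤ 2` iff `e'` meets `{u} ∪ N(u)`; consequently the subgraph `G'` of the
edges at distance `≥ 3` from `e` is the subgraph induced on the set `W` of vertices
lying on some edge of `G'`. -/
theorem stmt13 {V : Type*} (G : SimpleGraph V) (hch : IsChordal G)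
    (u v : V) (he : G.Adj u v)
    (hNv : ∀ a ∈ G.neighborSet v, ∀ b ∈ G.neighborSet v, a ≠ b → G.Adj a b) :
    (∀ e' ∈ G.edgeSet,
      (edgeDist G s(u, v) e' ≤ 2 ↔ ∃ w ∈ e', w = u ∨ G.Adj u w)) ∧
    (∀ a b : V, (farSubgraph G s(u, v)).Adj a b ↔
      (G.Adj a b ∧
        a ∈ {z : V | ∃ e' ∈ (farSubgraph G s(u, v)).edgeSet, z ∈ e'} ∧
        b ∈ {z : V | ∃ e' ∈ (farSubgraph G s(u, v)).edgeSet, z ∈ e'})) := by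
  have part1 : ∀ e' ∈ G.edgeSet,
      (edgeDist G s(u, v) e' ≤ 2 ↔ ∃ w ∈ e', w = u ∨ G.Adj u w) := by
    intro e' he'
    constructor
    · intro h
      rw [show (2 : ℕ∞) = ((2 : ℕ) : ℕ∞) from by norm_cast, edgeDist_le_iff] at h
      obtain ⟨ℓ, hℓ2, c, hc0, hclast, hedges, hinter⟩ := h
      interval_cases ℓ
      · refine ⟨u, ?_, Or.inl rfl⟩
        have : c (Fin.last 0) = s(u, v) := hc0
        rw [hclast] at this
        rw [this]
        simp
      · obtain ⟨x, hx0, hx1⟩ := hinter 0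
        have e0 : (0 : Fin 1).castSucc = (0 : Fin 2) := rfl
        have e1 : (0 : Fin 1).succ = Fin.last 1 := rfl
        rw [e0, hc0, Sym2.mem_iff] at hx0
        rw [e1, hclast] at hx1
        rcases hx0 with rfl | rfl
        · exact ⟨x, hx1, Or.inl rfl⟩
        · exact ⟨x, hx1, Or.inr he⟩
      · obtain ⟨x, hx0, hx1⟩ := hinter 0
        obtain ⟨y, hy1, hy2⟩ := hinter 1
        have e0 : (0 : Fin 2).castSucc = (0 : Fin 3) := rfl
        have e1 : (0 : Fin 2).succ = (1 : Fin 3) := rfl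
        have e2 : (1 : Fin 2).castSucc = (1 : Fin 3) := rfl
        have e3 : (1 : Fin 2).succ = Fin.last 2 := rfl
        rw [e0, hc0, Sym2.mem_iff] at hx0
        rw [e1] at hx1
        rw [e2] at hy1
        rw [e3, hclast] at hy2
        have hc1 : c 1 ∈ G.edgeSet := hedges 1
        by_cases hyu : y = u
        · exact ⟨y, hy2, Or.inl hyu⟩
        rcases hx0 with rfl | rfl
        · -- x = u
          have : G.Adj x y := adj_of_mem_edge hc1 hx1 hy1 (Ne.symm hyu)
          exact ⟨y, hy2, Or.inr this⟩
        · -- x = v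
          by_cases hyv : y = x
          · exact ⟨y, hy2, Or.inr (hyv ▸ he)⟩
          · have hadj : G.Adj x y := adj_of_mem_edge hc1 hx1 hy1 (Ne.symm hyv)
            have hu : u ∈ G.neighborSet x := he.symm
            have hy : y ∈ G.neighborSet x := hadj
            exact ⟨y, hy2, Or.inr (hNv u hu y hy (Ne.symm hyu))⟩
    · rintro ⟨w, hw, hwu | hwadj⟩
      · rw [show (2 : ℕ∞) = ((2 : ℕ) : ℕ∞) from by norm_cast, edgeDist_le_iff]
        refine ⟨1, by norm_num, ![s(u, v), e'], rfl, rfl, ?_, ?_⟩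
        · intro i
          fin_cases i
          · exact he
          · exact he'
        · intro i
          fin_cases i
          exact ⟨u, by simp, hwu ▸ hw⟩
      · rw [show (2 : ℕ∞) = ((2 : ℕ) : ℕ∞) from by norm_cast, edgeDist_le_iff]
        refine ⟨2, le_refl _, ![s(u, v), s(u, w), e'], rfl, rfl, ?_, ?_⟩
        · intro i
          fin_cases i
          · exact he
          · exact hwadj
          · exact he'
        · intro i
          fin_cases i
          · exact ⟨u, by simp, by simp⟩
          · exact ⟨w, by simp, hw⟩
  refine ⟨part1, ?_⟩
  intro a b
  constructor
  · intro h
    have hmem : s(a, b) ∈ (farSubgraph G s(u, v)).edgeSet := h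
    exact ⟨h.1, ⟨s(a, b), hmem, by simp⟩, ⟨s(a, b), hmem, by simp⟩⟩
  · rintro ⟨hab, ⟨ea, hea, haea⟩, ⟨eb, heb, hbeb⟩⟩
    have h3le : ∀ {e' : Sym2 V}, e' ∈ (farSubgraph G s(u, v)).edgeSet →
        ∀ z ∈ e', ¬(z = u ∨ G.Adj u z) := by
      intro e' he' z hz
      obtain ⟨hG, hd⟩ := far_edge G s(u, v) he'
      intro hcon
      have : edgeDist G s(u, v) e' ≤ 2 := (part1 e' hG).mpr ⟨z, hz, hcon⟩
      have h32 : (3 : ℕ∞) ≤ 2 := hd.trans this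
      exact absurd h32 (by decide)
    refine ⟨hab, ?_⟩
    have ha := h3le hea a haea
    have hb := h3le heb b hbeb
    by_contra hcon
    rw [not_le] at hcon
    have h23 : (3 : ℕ∞) = Order.succ 2 := by
      rw [Order.succ_eq_add_one]
      decide
    have hle : edgeDist G s(u, v) s(a, b) ≤ 2 := Order.le_of_lt_succ (h23 ▸ hcon)
    obtain ⟨w, hw, hcase⟩ := (part1 s(a, b) hab).mp hle
    rw [Sym2.mem_iff] at hw
    rcases hw with rfl | rfl
    · exact ha hcase
    · exact hb hcase
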